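/- Let S = [[A, B],[C, D]] (n×n blocks) be a real 2n×2n symplectic matrix with det B ≠ 0. Then det(S − I) = (−1)ⁿ · det(B) · det(B⁻¹A + D·B⁻¹ − B⁻¹ − (Bᵀ)⁻¹). -/

import Mathlib

open Matrix

/-- The standard symplectic matrix `J = [[0, I],[-I, 0]]`. -/
noncomputable def sympJ (n : ℕ) : Matrix (Fin n ⊕ Fin n) (Fin n ⊕ Fin n) ℝ :=
  Matrix.fromBlocks 0 1 (-1) 0

section Aux
open Equiv Equiv.Perm

-- swaps (inl i, inr i) are pairwise disjoint
lemma swap_disjoint {n : ℕ} {i j : Fin n} (hij : i ≠ j) :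
    (Equiv.swap (Sum.inl i : Fin n ⊕ Fin n) (Sum.inr i)).Disjoint
      (Equiv.swap (Sum.inl j) (Sum.inr j)) := by
  intro x
  rcases x with k | k
  · by_cases hk : k = i
    · subst hk
      right
      exact Equiv.swap_apply_of_ne_of_ne (by simp [hij]) (by simp)
    · left
      exact Equiv.swap_apply_of_ne_of_ne (by simp [hk]) (by simp)
  · by_cases hk : k = i
    · subst hk
      right
      exact Equiv.swap_apply_of_ne_of_ne (by simp) (by simp [hij])
    · left
      exact Equiv.swap_apply_of_ne_of_ne (by simp) (by simp [hk])

lemma comm_aux (n : ℕ) : (↑(Finset.univ : Finset (Fin n)) : Set (Fin n)).Pairwise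
    (Function.onFun Commute (fun i => Equiv.swap (Sum.inl i : Fin n ⊕ Fin n) (Sum.inr i))) :=
  fun i _ j _ hij => (swap_disjoint hij).commute

lemma sumComm_eq_noncommProd (n : ℕ) :
    (Equiv.sumComm (Fin n) (Fin n) : Equiv.Perm (Fin n ⊕ Fin n)) =
      Finset.univ.noncommProd (fun i => Equiv.swap (Sum.inl i) (Sum.inr i)) (comm_aux n) := by
  ext x
  have key : ∀ k : Fin n,
      Finset.univ.noncommProd (fun i => Equiv.swap (Sum.inl i : Fin n ⊕ Fin n) (Sum.inr i))
        (comm_aux n) (Sum.inl k) = Sum.inr k ∧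
      Finset.univ.noncommProd (fun i => Equiv.swap (Sum.inl i : Fin n ⊕ Fin n) (Sum.inr i))
        (comm_aux n) (Sum.inr k) = Sum.inl k := by
    intro k
    have hmem : k ∈ (Finset.univ : Finset (Fin n)) := Finset.mem_univ k
    have hins : (Finset.univ : Finset (Fin n)) = insert k (Finset.univ.erase k) := by
      simp [Finset.insert_erase hmem]
    rw [(Finset.noncommProd_congr hins (fun _ _ => rfl) (comm_aux n)).trans
      (Finset.noncommProd_insert_of_notMem _ _ _ _ (Finset.notMem_erase k _))]
    have comm' := (comm_aux n).mono (Finset.coe_subset.mpr (Finset.erase_subset k Finset.univ))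
    have hfix : ∀ y : Fin n ⊕ Fin n, (∀ j : Fin n, j ≠ k → Equiv.swap (Sum.inl j : Fin n ⊕ Fin n) (Sum.inr j) y = y) →
        (Finset.univ.erase k).noncommProd (fun i => Equiv.swap (Sum.inl i : Fin n ⊕ Fin n) (Sum.inr i)) comm' y = y := by
      intro y hy
      refine Finset.noncommProd_induction _ _ _ (fun g : Equiv.Perm (Fin n ⊕ Fin n) => g y = y)
        (fun a b ha hb => by simp [Equiv.Perm.mul_apply, hb, ha]) rfl ?_
      intro j hj
      exact hy j (Finset.ne_of_mem_erase hj)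
    constructor
    · rw [Equiv.Perm.mul_apply, hfix (Sum.inl k)
        (fun j hj => Equiv.swap_apply_of_ne_of_ne (by simp [hj.symm]) (by simp))]
      simp
    · rw [Equiv.Perm.mul_apply, hfix (Sum.inr k)
        (fun j hj => Equiv.swap_apply_of_ne_of_ne (by simp) (by simp [hj.symm]))]
      simp
  rcases x with k | k
  · simpa using ((key k).1).symm
  · simpa using ((key k).2).symm

lemma sign_sumComm (n : ℕ) :
    Equiv.Perm.sign (Equiv.sumComm (Fin n) (Fin n) : Equiv.Perm (Fin n ⊕ Fin n)) = (-1) ^ n := by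
  rw [sumComm_eq_noncommProd, Finset.map_noncommProd _ _ _ (Equiv.Perm.sign : Equiv.Perm (Fin n ⊕ Fin n) →* ℤˣ)]
  refine (Finset.noncommProd_eq_pow_card _ _ _ ((-1 : ℤˣ))
    (fun i _ => Equiv.Perm.sign_swap (by simp))).trans ?_
  simp

lemma detP (n : ℕ) :
    (Matrix.fromBlocks (0 : Matrix (Fin n) (Fin n) ℝ) (1 : Matrix (Fin n) (Fin n) ℝ)
      (1 : Matrix (Fin n) (Fin n) ℝ) (0 : Matrix (Fin n) (Fin n) ℝ)).det = (-1) ^ n := by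
  have h : Matrix.fromBlocks (0 : Matrix (Fin n) (Fin n) ℝ) (1 : Matrix (Fin n) (Fin n) ℝ)
      (1 : Matrix (Fin n) (Fin n) ℝ) (0 : Matrix (Fin n) (Fin n) ℝ) =
      (1 : Matrix (Fin n ⊕ Fin n) (Fin n ⊕ Fin n) ℝ).submatrix
        (Equiv.sumComm (Fin n) (Fin n)) id := by
    ext x y
    rcases x with i | i <;> rcases y with j | j <;>
      simp [Matrix.fromBlocks, Matrix.one_apply, Sum.inl.injEq, eq_comm]
  rw [h, Matrix.det_permute, Matrix.det_one, mul_one, sign_sumComm]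
  push_cast
  ring

end Aux

/-- if `S = [[A,B],[C,D]]` is symplectic with `det B ≠ 0`, then
`det (S - I) = (-1)ⁿ det B · det (B⁻¹A + D B⁻¹ - B⁻¹ - (Bᵀ)⁻¹)`. -/
theorem det_S_sub_one_free {n : ℕ} (A B C D : Matrix (Fin n) (Fin n) ℝ)
    (hS : (Matrix.fromBlocks A B C D)ᵀ * sympJ n * Matrix.fromBlocks A B C D = sympJ n)
    (hB : B.det ≠ 0) :
    (Matrix.fromBlocks A B C D - 1).det
      = (-1 : ℝ) ^ n * B.det * (B⁻¹ * A + D * B⁻¹ - B⁻¹ - (Bᵀ)⁻¹).det := by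
  have hBu : IsUnit B.det := isUnit_iff_ne_zero.mpr hB
  have hBTu : IsUnit Bᵀ.det := by rwa [Matrix.det_transpose]
  have hinv : B⁻¹ * B = 1 := Matrix.nonsing_inv_mul B hBu
  have hinv' : B * B⁻¹ = 1 := Matrix.mul_nonsing_inv B hBu
  -- block relations from symplecticity
  rw [sympJ, Matrix.fromBlocks_transpose, Matrix.fromBlocks_multiply,
    Matrix.fromBlocks_multiply] at hS
  have h21 := congrArg Matrix.toBlocks₂₁ hS
  have h22 := congrArg Matrix.toBlocks₂₂ hS
  simp only [Matrix.toBlocks_fromBlocks₂₁, Matrix.toBlocks_fromBlocks₂₂] at h21 h22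
  have e1 : Bᵀ * C - Dᵀ * A = -1 := by rw [← h21]; noncomm_ring
  have e2 : Bᵀ * D = Dᵀ * B := by
    have h : Bᵀ * D - Dᵀ * B = 0 := by rw [← h22]; noncomm_ring
    exact sub_eq_zero.mp h
  -- key identity
  set X : Matrix (Fin n) (Fin n) ℝ := B⁻¹ * A + D * B⁻¹ - B⁻¹ - (Bᵀ)⁻¹ with hXdef
  have key : C - D * B⁻¹ * A = -(Bᵀ)⁻¹ := by
    have h : Bᵀ * (C - D * B⁻¹ * A) = -1 := by
      have : Bᵀ * (D * B⁻¹ * A) = Dᵀ * A := by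
        rw [show Bᵀ * (D * B⁻¹ * A) = (Bᵀ * D) * B⁻¹ * A from by noncomm_ring, e2,
          Matrix.mul_assoc Dᵀ B B⁻¹, hinv', Matrix.mul_one]
      rw [Matrix.mul_sub, this, e1]
    have h2 := congrArg (fun Y => (Bᵀ)⁻¹ * Y) h
    simpa [← Matrix.mul_assoc, Matrix.nonsing_inv_mul Bᵀ hBTu] using h2
  have hX : C - (D - 1) * B⁻¹ * (A - 1) = X := by
    have expand : C - (D - 1) * B⁻¹ * (A - 1)
        = (C - D * B⁻¹ * A) + D * B⁻¹ + B⁻¹ * A - B⁻¹ := by noncomm_ring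
    rw [expand, key, hXdef]; abel
  -- subtract identity blockwise
  have hSsub : Matrix.fromBlocks A B C D - 1
      = Matrix.fromBlocks (A - 1) B C (D - 1) := by
    ext x y
    rcases x with i | i <;> rcases y with j | j <;>
      simp [Matrix.fromBlocks, Matrix.one_apply, Matrix.sub_apply] <;> aesop
  -- elimination matrix
  set L : Matrix (Fin n ⊕ Fin n) (Fin n ⊕ Fin n) ℝ :=
    Matrix.fromBlocks 1 0 (-((D - 1) * B⁻¹)) 1 with hLdef
  have hdetL : L.det = 1 := by
    rw [hLdef, Matrix.det_fromBlocks_zero₁₂]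
    simp
  have hLS : L * Matrix.fromBlocks (A - 1) B C (D - 1)
      = Matrix.fromBlocks (A - 1) B X 0 := by
    rw [hLdef, Matrix.fromBlocks_multiply]
    have b11 : (1 : Matrix (Fin n) (Fin n) ℝ) * (A - 1) + 0 * C = A - 1 := by simp
    have b12 : (1 : Matrix (Fin n) (Fin n) ℝ) * B + 0 * (D - 1) = B := by simp
    have b21 : -((D - 1) * B⁻¹) * (A - 1) + 1 * C = X := by
      rw [Matrix.one_mul, ← hX]; noncomm_ring
    have b22 : -((D - 1) * B⁻¹) * B + 1 * (D - 1) = 0 := by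
      rw [Matrix.one_mul, Matrix.neg_mul, Matrix.mul_assoc, hinv, Matrix.mul_one]
      abel
    rw [b11, b12, b21, b22]
  -- second step: swap columns
  have hswap : Matrix.fromBlocks (A - 1) B X 0 *
      Matrix.fromBlocks (0 : Matrix (Fin n) (Fin n) ℝ) (1 : Matrix (Fin n) (Fin n) ℝ)
        (1 : Matrix (Fin n) (Fin n) ℝ) (0 : Matrix (Fin n) (Fin n) ℝ)
      = Matrix.fromBlocks B (A - 1) 0 X := by
    rw [Matrix.fromBlocks_multiply]
    congr 1 <;> simp
  have hdet1 : (Matrix.fromBlocks A B C D - 1).det = (Matrix.fromBlocks (A - 1) B X 0).det := by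
    rw [hSsub, ← hLS, Matrix.det_mul, hdetL, one_mul]
  have hdet2 : (Matrix.fromBlocks (A - 1) B X 0).det * (-1 : ℝ) ^ n = B.det * X.det := by
    rw [← detP n, ← Matrix.det_mul, hswap, Matrix.det_fromBlocks_zero₂₁]
  have hsq : ((-1 : ℝ) ^ n) * ((-1 : ℝ) ^ n) = 1 := by
    rw [← mul_pow]; simp
  rw [hdet1]
  calc (Matrix.fromBlocks (A - 1) B X 0).det
      = (Matrix.fromBlocks (A - 1) B X 0).det * ((-1 : ℝ) ^ n * (-1 : ℝ) ^ n) := by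
        rw [hsq, mul_one]
    _ = (-1 : ℝ) ^ n * B.det * X.det := by rw [← mul_assoc, hdet2]; ring
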